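/- Let f : ℝⁿ → ℝ be differentiable with l ∈ ℝ such that f + (l/2)‖·‖² is convex, and let γ > 0. Suppose (u^t, v^t, x^t) are PDR iterates. Then for all t ≥ 1, ‖u^{t+1} − v^t‖² ≤ (−1 + 2γl)·‖u^{t+1} − u^t‖² + ‖x^t − x^{t−1}‖². -/

import Mathlib

open scoped InnerProductSpace RealInnerProductSpace
open Filter Topology

private lemma grad_mono_aux {n : ℕ} (l : ℝ) (f : EuclideanSpace ℝ (Fin n) → ℝ)
    (hf : Differentiable ℝ f)
    (hconv : ConvexOn ℝ Set.univ (fun w => f w + (l/2) * ‖w‖^2))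
    (a b : EuclideanSpace ℝ (Fin n)) :
    ⟪gradient f a, b - a⟫_ℝ + l * ⟪a, b - a⟫_ℝ
      ≤ ⟪gradient f b, b - a⟫_ℝ + l * ⟪b, b - a⟫_ℝ := by
  set c := b - a with hc
  set line : ℝ → EuclideanSpace ℝ (Fin n) := fun s => a + s • c with hline
  have hlineDeriv : ∀ s : ℝ, HasDerivAt line c s := by
    intro s
    have h1 : HasDerivAt (fun s : ℝ => s • c) ((1:ℝ) • c) s :=
      (hasDerivAt_id s).smul_const c
    have h2 := h1.const_add a
    rw [one_smul] at h2
    exact h2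
  set φ : ℝ → ℝ := fun s => f (line s) + (l/2) * ‖line s‖^2 with hφ
  have hφconv : ConvexOn ℝ Set.univ φ := by
    have haff : ConvexOn ℝ ((AffineMap.lineMap a b : ℝ →ᵃ[ℝ] _) ⁻¹' Set.univ)
        ((fun w => f w + (l/2) * ‖w‖^2) ∘ (AffineMap.lineMap a b : ℝ →ᵃ[ℝ] _)) :=
      hconv.comp_affineMap _
    have : ((AffineMap.lineMap a b : ℝ →ᵃ[ℝ] _) ⁻¹' Set.univ) = (Set.univ : Set ℝ) := by simp
    rw [this] at haff
    convert haff using 1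
    funext s
    simp only [φ, hline, AffineMap.lineMap_apply, hc, Function.comp]
    rw [add_comm a (s • (b - a))]
    simp only [vsub_eq_sub, vadd_eq_add]
  have hφderiv : ∀ s : ℝ,
      HasDerivAt φ (⟪gradient f (line s), c⟫_ℝ + l * ⟪line s, c⟫_ℝ) s := by
    intro s
    have hfd : HasDerivAt (fun t => f (line t)) (⟪gradient f (line s), c⟫_ℝ) s := by
      have := ((hf (line s)).hasGradientAt.hasFDerivAt).comp_hasDerivAt s (hlineDeriv s)
      exact this
    have hinner : HasDerivAt (fun t => ⟪line t, line t⟫_ℝ)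
        (⟪line s, c⟫_ℝ + ⟪c, line s⟫_ℝ) s :=
      (hlineDeriv s).inner ℝ (hlineDeriv s)
    have hnorm : HasDerivAt (fun t => (l/2) * ‖line t‖^2)
        (l * ⟪line s, c⟫_ℝ) s := by
      have h2 : HasDerivAt (fun t => (l/2) * ⟪line t, line t⟫_ℝ)
          ((l/2) * (⟪line s, c⟫_ℝ + ⟪c, line s⟫_ℝ)) s := hinner.const_mul (l/2)
      have heq : (fun t => (l/2) * ⟪line t, line t⟫_ℝ)
          = (fun t => (l/2) * ‖line t‖^2) := by
        funext t; rw [real_inner_self_eq_norm_sq]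
      rw [heq] at h2
      convert h2 using 1
      rw [real_inner_comm c (line s)]; ring
    exact hfd.add hnorm
  have h01 : (0:ℝ) < 1 := one_pos
  have hle1 := hφconv.le_slope_of_hasDerivAt (Set.mem_univ 0) (Set.mem_univ 1) h01 (hφderiv 0)
  have hle2 := hφconv.slope_le_of_hasDerivAt (Set.mem_univ 0) (Set.mem_univ 1) h01 (hφderiv 1)
  have hkey := hle1.trans hle2
  have h0 : line 0 = a := by simp [hline]
  have h1 : line 1 = b := by simp [hline, hc]
  rw [h0, h1] at hkey
  exact hkey

/-- for PDR iterates,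
`‖u^{t+1} − v^t‖² ≤ (−1 + 2γl)‖u^{t+1} − u^t‖² + ‖x^t − x^{t−1}‖²` for all `t ≥ 1`. -/
theorem pdr_u_sub_v_sq_le {n : ℕ} (l γ α : ℝ) (hγ : 0 < γ) (hα : 3/2 < α ∧ α ≤ 2)
    (f : EuclideanSpace ℝ (Fin n) → ℝ) (g : EuclideanSpace ℝ (Fin n) → EReal)
    (hf : Differentiable ℝ f)
    (hconv : ConvexOn ℝ Set.univ (fun w => f w + (l/2) * ‖w‖^2))
    (hg_lsc : LowerSemicontinuous g) (hg_bot : ∀ w, g w ≠ ⊥) (hg_proper : ∃ w, g w ≠ ⊤)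
    (u v x : ℕ → EuclideanSpace ℝ (Fin n))
    (hu : ∀ t : ℕ, ∀ w, f (u (t+1)) + (1/(2*γ)) * ‖u (t+1) - x t‖^2
        ≤ f w + (1/(2*γ)) * ‖w - x t‖^2)
    (hv : ∀ t : ℕ, ∀ w,
        g (v (t+1)) + (((1/(2*γ)) * ‖v (t+1) - (α • u (t+1) - x t)‖^2 : ℝ) : EReal)
        ≤ g w + (((1/(2*γ)) * ‖w - (α • u (t+1) - x t)‖^2 : ℝ) : EReal))
    (hx : ∀ t : ℕ, x (t+1) = x t + v (t+1) - u (t+1))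
    (hgradu : ∀ t : ℕ, gradient f (u (t+1)) + (1/γ) • (u (t+1) - x t) = 0) :
    ∀ t : ℕ, 1 ≤ t →
      ‖u (t+1) - v t‖^2 ≤ (-1 + 2*γ*l) * ‖u (t+1) - u t‖^2 + ‖x t - x (t-1)‖^2 := by
  intro t ht
  obtain ⟨s, rfl⟩ : ∃ s, t = s + 1 := ⟨t - 1, (Nat.succ_pred_eq_of_pos ht).symm⟩
  set t := s + 1
  have hts : t - 1 = s := rfl
  rw [hts]
  set d := u (t+1) - u t with hd
  set e := x t - x s with he
  -- gradient identities
  have g1 : gradient f (u (t+1)) = (1/γ) • (x t - u (t+1)) := by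
    have := hgradu t
    have h := eq_neg_of_add_eq_zero_left this
    rw [h]; rw [← smul_neg]; congr 1; abel
  have g0 : gradient f (u t) = (1/γ) • (x s - u t) := by
    have := hgradu s
    have h := eq_neg_of_add_eq_zero_left this
    rw [h]; rw [← smul_neg]; congr 1; abel
  -- v t = u t + e
  have hv_eq : v t = u t + e := by
    have := hx s
    rw [he]
    have : x t - x s = v t - u t := by rw [this]; abel
    rw [this]; abel
  -- monotonicity
  have hmono := grad_mono_aux l f hf hconv (u t) (u (t+1))
  have hdiff : gradient f (u (t+1)) - gradient f (u t) = (1/γ) • (e - d) := by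
    rw [g0, g1, ← smul_sub]
    congr 1
    rw [he, hd]; abel
  -- turn hmono into inner bound: (1/γ) * ⟪e - d, d⟫ + l * ‖d‖^2 ≥ 0
  have hmono' : 0 ≤ (1/γ) * ⟪e - d, d⟫_ℝ + l * ‖d‖^2 := by
    have h3 : ⟪gradient f (u (t+1)) - gradient f (u t), u (t+1) - u t⟫_ℝ
        = ⟪gradient f (u (t+1)), u (t+1) - u t⟫_ℝ
          - ⟪gradient f (u t), u (t+1) - u t⟫_ℝ := inner_sub_left _ _ _
    have h5 : ⟪u (t+1), u (t+1) - u t⟫_ℝ - ⟪u t, u (t+1) - u t⟫_ℝ = ‖d‖^2 := by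
      rw [← inner_sub_left, real_inner_self_eq_norm_sq, hd]
    have h6 : ⟪gradient f (u (t+1)) - gradient f (u t), u (t+1) - u t⟫_ℝ
        = (1/γ) * ⟪e - d, d⟫_ℝ := by
      rw [hdiff, real_inner_smul_left, hd]
    have h8 : l * (⟪u (t+1), u (t+1) - u t⟫_ℝ - ⟪u t, u (t+1) - u t⟫_ℝ)
        = l * ⟪u (t+1), u (t+1) - u t⟫_ℝ - l * ⟪u t, u (t+1) - u t⟫_ℝ := by ring
    have h9 : l * (⟪u (t+1), u (t+1) - u t⟫_ℝ - ⟪u t, u (t+1) - u t⟫_ℝ)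
        = l * ‖d‖^2 := by rw [h5]
    linarith [hmono, h3, h6, h8, h9]
  have hγ' : (0:ℝ) < 1/γ := by positivity
  have hinner_bound : (1 - γ * l) * ‖d‖^2 ≤ ⟪e, d⟫_ℝ := by
    have h6 : ⟪e - d, d⟫_ℝ = ⟪e, d⟫_ℝ - ‖d‖^2 := by
      rw [inner_sub_left, real_inner_self_eq_norm_sq]
    rw [h6] at hmono'
    have h7 : 0 ≤ (1/γ) * (⟪e, d⟫_ℝ - ‖d‖^2 + γ * l * ‖d‖^2) := by
      have : (1/γ) * (⟪e, d⟫_ℝ - ‖d‖^2 + γ * l * ‖d‖^2)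
          = (1/γ) * (⟪e, d⟫_ℝ - ‖d‖^2) + l * ‖d‖^2 := by
        field_simp
      rw [this]
      linarith [hmono']
    nlinarith [h7, hγ']
  -- final computation
  have hgoal : u (t+1) - v t = d - e := by
    rw [hv_eq, hd]; abel
  rw [hgoal]
  have hexp : ‖d - e‖^2 = ‖d‖^2 - 2 * ⟪d, e⟫_ℝ + ‖e‖^2 := by
    rw [@norm_sub_sq_real]
  rw [hexp]
  have hsym : ⟪d, e⟫_ℝ = ⟪e, d⟫_ℝ := real_inner_comm e d
  rw [hsym]
  have : ‖u (t+1) - u t‖^2 = ‖d‖^2 := by rw [hd]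
  rw [this]
  nlinarith [hinner_bound]
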